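/- Let G be a connected simple graph on n vertices. For each unordered pair of distinct vertices u,v fix a shortest path P_{uv}, and for each edge k define the connection-graph-stability score C_k as the sum of |P_{uv}| over all pairs {u,v} whose chosen path uses edge k. Then the algebraic connectivity λ₂ (second smallest eigenvalue of the Laplacian) satisfies λ₂ ≥ n / C_max, where C_max = max over edges k of C_k. -/

import Mathlib

open SimpleGraph Finset

/-- The algebraic connectivity: the second smallest eigenvalue of the Laplacian matrix. -/
noncomputable def algebraicConnectivity {n : ℕ} (G : SimpleGraph (Fin n))
    [DecidableRel G.Adj] : ℝ :=
  if h : 1 < n then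
    (((G.posSemidef_lapMatrix ℝ).1.eigenvalues) ∘
      (Tuple.sort ((G.posSemidef_lapMatrix ℝ).1.eigenvalues))) ⟨1, h⟩
  else 0

/-- A fixed system of shortest paths, one for each (ordered) pair of vertices. -/
structure ShortestPathSystem {n : ℕ} (G : SimpleGraph (Fin n)) where
  path : ∀ u v : Fin n, G.Walk u v
  isPath : ∀ u v : Fin n, (path u v).IsPath
  length_eq : ∀ u v : Fin n, (path u v).length = G.dist u v

/-- The connection-graph-stability score of an edge `e`: half the double sum over ordered
pairs of vertices of the length of the chosen shortest path, if it passes through `e`. -/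
noncomputable def cgsScore {n : ℕ} {G : SimpleGraph (Fin n)} (P : ShortestPathSystem G)
    (e : Sym2 (Fin n)) : ℝ :=
  (1/2) * ∑ u : Fin n, ∑ v : Fin n,
    (if e ∈ (P.path u v).edges then ((P.path u v).length : ℝ) else 0)

/-- The squared difference of `x` across an edge. -/
noncomputable def edgeSq {V : Type*} (x : V → ℝ) : Sym2 V → ℝ :=
  Sym2.lift ⟨fun a b => (x a - x b)^2, fun a b => by ring_nf⟩

namespace CGSAux

open Matrix

@[simp] lemma edgeSq_mk {V : Type*} (x : V → ℝ) (a b : V) :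
    edgeSq x s(a, b) = (x a - x b)^2 := rfl

lemma edgeSq_nonneg {V : Type*} (x : V → ℝ) (e : Sym2 V) : 0 ≤ edgeSq x e := by
  induction e using Sym2.ind with
  | _ a b => exact sq_nonneg _

lemma step_aux (L T s t : ℝ) (hL : 0 ≤ L) (hT : 0 ≤ T) (ih : t^2 ≤ L * T) :
    (s + t)^2 ≤ (L + 1) * (s^2 + T) := by
  rcases eq_or_lt_of_le hL with h0 | h0
  · have ht : t = 0 := by nlinarith [sq_nonneg t]
    subst ht; nlinarith
  · nlinarith [sq_nonneg (L*s - t), mul_nonneg (by linarith : (0:ℝ) ≤ L + 1)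
      (by linarith : (0:ℝ) ≤ L * T - t^2)]

lemma walk_sq_le {V : Type*} {G : SimpleGraph V} (x : V → ℝ) {u v : V}
    (w : G.Walk u v) :
    (x u - x v)^2 ≤ (w.length : ℝ) * (w.edges.map (edgeSq x)).sum := by
  induction w with
  | nil => simp
  | @cons a b c h w ih =>
    have hT : 0 ≤ (w.edges.map (edgeSq x)).sum := by
      apply List.sum_nonneg
      intro y hy
      obtain ⟨e, _, rfl⟩ := List.mem_map.1 hy
      exact edgeSq_nonneg x e
    have hL : (0:ℝ) ≤ (w.length : ℝ) := Nat.cast_nonneg _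
    simp only [SimpleGraph.Walk.edges_cons, SimpleGraph.Walk.length_cons, List.map_cons,
      List.sum_cons, edgeSq_mk, Nat.cast_add, Nat.cast_one]
    have := step_aux (w.length : ℝ) ((w.edges.map (edgeSq x)).sum) (x a - x b) (x b - x c)
      hL hT ih
    calc (x a - x c)^2 = ((x a - x b) + (x b - x c))^2 := by ring
      _ ≤ ((w.length : ℝ) + 1) * ((x a - x b)^2 + (w.edges.map (edgeSq x)).sum) := this
      _ = ((w.length : ℝ) + 1) * ((x a - x b)^2 + (w.edges.map (edgeSq x)).sum) := rfl

lemma list_sum_eq {V : Type*} [Fintype V] [DecidableEq V] {G : SimpleGraph V}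
    [DecidableRel G.Adj] {u v : V} {w : G.Walk u v} (hw : w.IsPath) (f : Sym2 V → ℝ) :
    (w.edges.map f).sum = ∑ e ∈ G.edgeFinset, if e ∈ w.edges then f e else 0 := by
  classical
  rw [← List.sum_toFinset f hw.edges_nodup]
  simp only [← List.mem_toFinset]
  rw [Finset.sum_ite_mem]
  rw [Finset.inter_eq_right.mpr ?_]
  · intro e he
    rw [List.mem_toFinset] at he
    exact SimpleGraph.mem_edgeFinset.2 (w.edges_subset_edgeSet he)

lemma sum_dart_eq {V : Type*} [Fintype V] [DecidableEq V] (G : SimpleGraph V)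
    [DecidableRel G.Adj] (f : Sym2 V → ℝ) :
    ∑ d : G.Dart, f d.edge = 2 * ∑ e ∈ G.edgeFinset, f e := by
  rw [← Finset.sum_fiberwise_of_maps_to (g := SimpleGraph.Dart.edge)
    (fun d _ => SimpleGraph.mem_edgeFinset.2 d.edge_mem)]
  rw [Finset.mul_sum]
  apply Finset.sum_congr rfl
  intro e he
  rw [Finset.sum_congr rfl (fun d hd => by rw [(Finset.mem_filter.1 hd).2]),
    Finset.sum_const]
  have h2 := G.dart_edge_fiber_card e (SimpleGraph.mem_edgeFinset.1 he)
  rw [h2, two_smul]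
  ring

lemma double_sum_eq_dart {V : Type*} [Fintype V] [DecidableEq V] (G : SimpleGraph V)
    [DecidableRel G.Adj] (f : Sym2 V → ℝ) :
    ∑ i : V, ∑ j : V, (if G.Adj i j then f s(i,j) else 0) = ∑ d : G.Dart, f d.edge := by
  classical
  have h1 : ∑ p ∈ (univ ×ˢ univ : Finset (V × V)), (if G.Adj p.1 p.2 then f s(p.1, p.2) else 0)
      = ∑ i : V, ∑ j : V, (if G.Adj i j then f s(i,j) else 0) := by
    rw [Finset.sum_product]
  rw [← h1, ← Finset.sum_filter]
  refine Finset.sum_bij' (fun p hp => (⟨p, (Finset.mem_filter.1 hp).2⟩ : G.Dart))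
    (fun d _ => d.toProd) ?_ ?_ ?_ ?_ ?_ <;> intros <;> simp_all [SimpleGraph.Dart.edge]

lemma key {n : ℕ} {G : SimpleGraph (Fin n)} [DecidableRel G.Adj]
    (P : ShortestPathSystem G) {Cmax : ℝ}
    (hC : Cmax ∈ upperBounds (cgsScore P '' G.edgeSet)) (x : Fin n → ℝ)
    (hx : ∑ i, x i = 0) :
    (n : ℝ) * ∑ i, (x i)^2 ≤ Cmax * ∑ e ∈ G.edgeFinset, edgeSq x e := by
  classical
  have expand : ∑ u : Fin n, ∑ v : Fin n, (x u - x v)^2 = 2 * n * ∑ i, (x i)^2 := by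
    have h1 : ∀ u : Fin n, ∑ v : Fin n, (x u - x v)^2 = (n:ℝ) * (x u)^2 + ∑ v, (x v)^2 := by
      intro u
      have h2 : ∑ v : Fin n, (x u - x v)^2
          = ∑ v : Fin n, ((x u)^2 - 2 * x u * x v + (x v)^2) := by
        apply Finset.sum_congr rfl; intros; ring
      rw [h2, Finset.sum_add_distrib, Finset.sum_sub_distrib, Finset.sum_const,
        ← Finset.mul_sum, hx, Finset.card_univ, Fintype.card_fin, nsmul_eq_mul]
      ring
    simp_rw [h1, Finset.sum_add_distrib, Finset.sum_const, Finset.card_univ, Fintype.card_fin,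
      nsmul_eq_mul, ← Finset.mul_sum]
    ring
  have step1 : ∑ u : Fin n, ∑ v : Fin n, (x u - x v)^2
      ≤ ∑ u : Fin n, ∑ v : Fin n, ((P.path u v).length : ℝ) *
          ∑ e ∈ G.edgeFinset, (if e ∈ (P.path u v).edges then edgeSq x e else 0) := by
    apply Finset.sum_le_sum; intro u _
    apply Finset.sum_le_sum; intro v _
    have := walk_sq_le x (P.path u v)
    rwa [list_sum_eq (P.isPath u v)] at this
  have swap : ∑ u : Fin n, ∑ v : Fin n, ((P.path u v).length : ℝ) *
          ∑ e ∈ G.edgeFinset, (if e ∈ (P.path u v).edges then edgeSq x e else 0)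
      = ∑ e ∈ G.edgeFinset, edgeSq x e * (2 * cgsScore P e) := by
    have hterm : ∀ (c : Prop) [Decidable c] (L q : ℝ),
        L * (if c then q else 0) = q * (if c then L else 0) := by
      intros c _ L q; split_ifs <;> ring
    simp_rw [Finset.mul_sum, hterm]
    have h1 : ∀ u : Fin n, (∑ v : Fin n, ∑ e ∈ G.edgeFinset,
        edgeSq x e * (if e ∈ (P.path u v).edges then ((P.path u v).length : ℝ) else 0))
        = ∑ e ∈ G.edgeFinset, ∑ v : Fin n,
        edgeSq x e * (if e ∈ (P.path u v).edges then ((P.path u v).length : ℝ) else 0) :=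
      fun u => Finset.sum_comm
    simp_rw [h1]
    rw [Finset.sum_comm]
    apply Finset.sum_congr rfl
    intro e _
    simp_rw [← Finset.mul_sum]
    rw [cgsScore]
    ring
  calc (n : ℝ) * ∑ i, (x i)^2
      = (1/2) * (2 * n * ∑ i, (x i)^2) := by ring
    _ ≤ (1/2) * (∑ e ∈ G.edgeFinset, edgeSq x e * (2 * cgsScore P e)) := by
        rw [← expand]
        have := le_trans step1 (le_of_eq swap)
        linarith
    _ ≤ (1/2) * (∑ e ∈ G.edgeFinset, edgeSq x e * (2 * Cmax)) := by
        have : ∑ e ∈ G.edgeFinset, edgeSq x e * (2 * cgsScore P e)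
            ≤ ∑ e ∈ G.edgeFinset, edgeSq x e * (2 * Cmax) := by
          apply Finset.sum_le_sum
          intro e he
          apply mul_le_mul_of_nonneg_left _ (edgeSq_nonneg x e)
          have : cgsScore P e ≤ Cmax :=
            hC ⟨e, SimpleGraph.mem_edgeFinset.1 he, rfl⟩
          linarith
        linarith
    _ = Cmax * ∑ e ∈ G.edgeFinset, edgeSq x e := by
        rw [← Finset.sum_mul]
        ring

lemma quad_eq {n : ℕ} (G : SimpleGraph (Fin n)) [DecidableRel G.Adj] (x : Fin n → ℝ) :
    x ⬝ᵥ (G.lapMatrix ℝ *ᵥ x) = ∑ e ∈ G.edgeFinset, edgeSq x e := by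
  rw [← Matrix.toLinearMap₂'_apply', SimpleGraph.lapMatrix_toLinearMap₂']
  have h : ∑ i : Fin n, ∑ j : Fin n, (if G.Adj i j then (x i - x j)^2 else 0)
      = 2 * ∑ e ∈ G.edgeFinset, edgeSq x e := by
    rw [← sum_dart_eq G (edgeSq x), ← double_sum_eq_dart G (edgeSq x)]
    rfl
  rw [h]; ring

lemma col_sum_zero {n : ℕ} (G : SimpleGraph (Fin n)) [DecidableRel G.Adj] (k : Fin n) :
    ∑ j : Fin n, G.lapMatrix ℝ j k = 0 := by
  have h1 := congrFun (G.lapMatrix_mulVec_const_eq_zero (R := ℝ)) k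
  simp only [Matrix.mulVec, dotProduct, mul_one, Pi.zero_apply] at h1
  rw [← h1]
  apply Finset.sum_congr rfl
  intro j _
  exact congrFun (congrFun (G.isSymm_lapMatrix (R := ℝ)).eq j) k ▸ rfl

lemma eigen_sum_zero {n : ℕ} (G : SimpleGraph (Fin n)) [DecidableRel G.Adj]
    {x : Fin n → ℝ} {μ : ℝ} (hμ : μ ≠ 0) (hx : G.lapMatrix ℝ *ᵥ x = μ • x) :
    ∑ j, x j = 0 := by
  have h1 : ∑ j, (G.lapMatrix ℝ *ᵥ x) j = 0 := by
    simp only [Matrix.mulVec, dotProduct]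
    rw [Finset.sum_comm]
    apply Finset.sum_eq_zero
    intro k _
    rw [← Finset.sum_mul, col_sum_zero, zero_mul]
  rw [hx] at h1
  simp only [Pi.smul_apply, smul_eq_mul, ← Finset.mul_sum] at h1
  exact (mul_eq_zero.1 h1).resolve_left hμ

lemma basis_sq_sum_pos {n : ℕ} (G : SimpleGraph (Fin n)) [DecidableRel G.Adj] (i : Fin n) :
    0 < ∑ j, ((G.posSemidef_lapMatrix ℝ).1.eigenvectorBasis i : EuclideanSpace ℝ (Fin n)) j ^ 2 := by
  set x := ((G.posSemidef_lapMatrix ℝ).1.eigenvectorBasis i : EuclideanSpace ℝ (Fin n))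
  have hne : x ≠ 0 := (G.posSemidef_lapMatrix ℝ).1.eigenvectorBasis.orthonormal.ne_zero i
  rcases (Finset.sum_nonneg (fun j _ => sq_nonneg (x j))).eq_or_lt with h | h
  · exfalso
    apply hne
    ext j
    have := (Finset.sum_eq_zero_iff_of_nonneg (fun j _ => sq_nonneg (x j))).1 (by linarith) j
      (mem_univ j)
    exact pow_eq_zero_iff (by norm_num) |>.1 this
  · exact h

lemma eig_dichotomy {n : ℕ} (G : SimpleGraph (Fin n)) [DecidableRel G.Adj]
    (P : ShortestPathSystem G) {Cmax : ℝ}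
    (hC : Cmax ∈ upperBounds (cgsScore P '' G.edgeSet)) (hCpos : 0 < Cmax) (i : Fin n) :
    (G.posSemidef_lapMatrix ℝ).1.eigenvalues i = 0 ∨
      (n : ℝ) / Cmax ≤ (G.posSemidef_lapMatrix ℝ).1.eigenvalues i := by
  set hL := (G.posSemidef_lapMatrix ℝ).1 with hLdef
  set μ := hL.eigenvalues i with hμdef
  by_cases hμ : μ = 0
  · exact Or.inl hμ
  · right
    set x := (hL.eigenvectorBasis i : EuclideanSpace ℝ (Fin n)) with hxdef
    have hev : G.lapMatrix ℝ *ᵥ x = μ • x := hL.mulVec_eigenvectorBasis i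
    have hsum : ∑ j, x j = 0 := eigen_sum_zero G hμ hev
    have hkey := key P hC x hsum
    have hq : (x : Fin n → ℝ) ⬝ᵥ (G.lapMatrix ℝ *ᵥ x) = μ * ∑ j, x j ^ 2 := by
      rw [hev]
      simp only [dotProduct, PiLp.smul_apply, Pi.smul_apply, smul_eq_mul]
      rw [Finset.mul_sum]
      apply Finset.sum_congr rfl
      intros; ring
    rw [quad_eq] at hq
    have hpos : 0 < ∑ j, x j ^ 2 := basis_sq_sum_pos G i
    rw [div_le_iff₀ hCpos]
    have : (n : ℝ) * ∑ j, x j ^ 2 ≤ Cmax * (μ * ∑ j, x j ^ 2) := by rw [← hq]; exact hkey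
    nlinarith

lemma zero_unique {n : ℕ} (G : SimpleGraph (Fin n)) [DecidableRel G.Adj]
    (hG : G.Connected) {i j : Fin n}
    (hi : (G.posSemidef_lapMatrix ℝ).1.eigenvalues i = 0)
    (hj : (G.posSemidef_lapMatrix ℝ).1.eigenvalues j = 0) : i = j := by
  set hL := (G.posSemidef_lapMatrix ℝ).1 with hLdef
  by_contra hne
  have hker : ∀ k : Fin n, hL.eigenvalues k = 0 →
      ∀ a : Fin n, (hL.eigenvectorBasis k : EuclideanSpace ℝ (Fin n)) a
        = (hL.eigenvectorBasis k : EuclideanSpace ℝ (Fin n)) ⟨0, by omega⟩ := by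
    intro k hk a
    have hev : G.lapMatrix ℝ *ᵥ (hL.eigenvectorBasis k : EuclideanSpace ℝ (Fin n))
        = 0 := by
      have := hL.mulVec_eigenvectorBasis k
      rw [hk, zero_smul] at this
      exact this
    have h0 : Matrix.toLin' (G.lapMatrix ℝ)
        (hL.eigenvectorBasis k : EuclideanSpace ℝ (Fin n)) = 0 := by
      rw [Matrix.toLin'_apply]; exact hev
    exact (G.lapMatrix_mulVec_eq_zero_iff_forall_reachable).1 hev a _
      (hG.preconnected a _)
  have hin : (inner ℝ (hL.eigenvectorBasis i) (hL.eigenvectorBasis j) : ℝ) = 0 :=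
    hL.eigenvectorBasis.orthonormal.2 hne
  have hn0 : 0 < n := i.pos
  have hinner : ∑ k : Fin n, (hL.eigenvectorBasis i : EuclideanSpace ℝ (Fin n)) k *
      (hL.eigenvectorBasis j : EuclideanSpace ℝ (Fin n)) k = 0 := by
    rw [← hin, PiLp.inner_apply]
    apply Finset.sum_congr rfl
    intros
    simp [RCLike.inner_apply, starRingEnd_apply, mul_comm]
  set c := (hL.eigenvectorBasis i : EuclideanSpace ℝ (Fin n)) ⟨0, hn0⟩ with hc
  set d := (hL.eigenvectorBasis j : EuclideanSpace ℝ (Fin n)) ⟨0, hn0⟩ with hd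
  have hsum : ∑ k : Fin n, (hL.eigenvectorBasis i : EuclideanSpace ℝ (Fin n)) k *
      (hL.eigenvectorBasis j : EuclideanSpace ℝ (Fin n)) k = (n : ℝ) * (c * d) := by
    rw [Finset.sum_congr rfl (fun k _ => by rw [hker i hi k, hker j hj k])]
    rw [Finset.sum_const, Finset.card_univ, Fintype.card_fin, nsmul_eq_mul]
  have hcd : c * d = 0 := by
    rw [hsum] at hinner
    have : (n : ℝ) ≠ 0 := Nat.cast_ne_zero.2 hn0.ne'
    exact (mul_eq_zero.1 hinner).resolve_left this
  have hzero : ∀ k : Fin n, hL.eigenvalues k = 0 →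
      (hL.eigenvectorBasis k : EuclideanSpace ℝ (Fin n)) ⟨0, hn0⟩ = 0 → False := by
    intro k hk h0
    apply hL.eigenvectorBasis.orthonormal.ne_zero k
    ext a
    rw [hker k hk a, h0]
    rfl
  rcases mul_eq_zero.1 hcd with h | h
  · exact hzero i hi h
  · exact hzero j hj h

end CGSAux

/-- The connection-graph-stability lower bound for the algebraic connectivity:
`λ₂ ≥ n / C_max`. -/
theorem algebraicConnectivity_ge_div_cgsScore_max {n : ℕ} (G : SimpleGraph (Fin n))
    [DecidableRel G.Adj] (hG : G.Connected) (hn : 2 ≤ n)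
    (P : ShortestPathSystem G) (Cmax : ℝ)
    (hC : IsGreatest (cgsScore P '' G.edgeSet) Cmax) :
    (n : ℝ) / Cmax ≤ algebraicConnectivity G := by
  have h1 : 1 < n := hn
  rw [algebraicConnectivity, dif_pos h1]
  simp only [Function.comp_apply]
  rcases le_or_gt Cmax 0 with hc | hc
  · exact le_trans (div_nonpos_of_nonneg_of_nonpos (Nat.cast_nonneg n) hc)
      ((G.posSemidef_lapMatrix ℝ).eigenvalues_nonneg _)
  · by_contra hlt
    push_neg at hlt
    have h1eig : (G.posSemidef_lapMatrix ℝ).1.eigenvalues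
        (Tuple.sort ((G.posSemidef_lapMatrix ℝ).1.eigenvalues) ⟨1, h1⟩) = 0 :=
      (CGSAux.eig_dichotomy G P hC.2 hc _).resolve_right (not_le.2 hlt)
    have hmono : (G.posSemidef_lapMatrix ℝ).1.eigenvalues
        (Tuple.sort ((G.posSemidef_lapMatrix ℝ).1.eigenvalues) ⟨0, by omega⟩)
        ≤ (G.posSemidef_lapMatrix ℝ).1.eigenvalues
        (Tuple.sort ((G.posSemidef_lapMatrix ℝ).1.eigenvalues) ⟨1, h1⟩) :=
      Tuple.monotone_sort ((G.posSemidef_lapMatrix ℝ).1.eigenvalues)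
        (show (⟨0, by omega⟩ : Fin n) ≤ ⟨1, h1⟩ from Fin.mk_le_mk.2 (by omega))
    have h0eig : (G.posSemidef_lapMatrix ℝ).1.eigenvalues
        (Tuple.sort ((G.posSemidef_lapMatrix ℝ).1.eigenvalues) ⟨0, by omega⟩) = 0 :=
      le_antisymm (by rw [h1eig] at hmono; exact hmono)
        ((G.posSemidef_lapMatrix ℝ).eigenvalues_nonneg _)
    have heq := CGSAux.zero_unique G hG h0eig h1eig
    have := (Tuple.sort ((G.posSemidef_lapMatrix ℝ).1.eigenvalues)).injective heq
    simp [Fin.ext_iff] at this
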